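/- Let u, v, ξ ∈ ℂⁿ (n ≥ 2) where ξ has pairwise distinct coordinates, let 1 ≤ p ≤ ∞ with conjugate exponent q, and suppose |vᵢ - ξᵢ| ≤ |uᵢ - ξᵢ| for all i. Then for all i ≠ j, |uᵢ - vⱼ| ≥ (1 - 2^{1/q} ‖(u - ξ)/d(ξ)‖_p) |ξᵢ - ξⱼ|. -/

import Mathlib

open scoped ENNReal

noncomputable def pnorm (p : ℝ≥0∞) {n : ℕ} (w : Fin n → ℝ) : ℝ :=
  ‖(WithLp.equiv p (Fin n → ℝ)).symm w‖

noncomputable def dmin {n : ℕ} (v : Fin n → ℂ) (i : Fin n) : ℝ :=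
  ⨅ j : {j : Fin n // j ≠ i}, ‖v i - v j.1‖

theorem u_v_xi_inequality (n : ℕ) (hn : 2 ≤ n) (u v ξ : Fin n → ℂ)
    (hξ : Function.Injective ξ) (p q : ℝ≥0∞) (hp : 1 ≤ p) (hpq : 1/p + 1/q = 1)
    (hvu : ∀ i, ‖v i - ξ i‖ ≤ ‖u i - ξ i‖) :
    ∀ i j : Fin n, i ≠ j →
      (1 - (2:ℝ) ^ (1/q).toReal * pnorm p (fun k => ‖u k - ξ k‖ / dmin ξ k))
          * ‖ξ i - ξ j‖
        ≤ ‖u i - v j‖ := by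
  haveI : Nontrivial (Fin n) := Fin.nontrivial_iff_two_le.mpr hn
  set w : Fin n → ℝ := fun k => ‖u k - ξ k‖ / dmin ξ k with hw
  -- positivity of dmin
  have hd : ∀ k : Fin n, 0 < dmin ξ k := by
    intro k
    haveI : Nonempty {j : Fin n // j ≠ k} := by
      obtain ⟨m, hm⟩ := exists_ne k
      exact ⟨⟨m, hm⟩⟩
    obtain ⟨x₀, hx₀⟩ := Finite.exists_min
      (fun j : {j : Fin n // j ≠ k} => ‖ξ k - ξ j.1‖)
    have h0 : 0 < ‖ξ k - ξ x₀.1‖ := by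
      rw [norm_pos_iff, sub_ne_zero]
      exact fun h => x₀.2 (hξ h).symm
    exact lt_of_lt_of_le h0 (le_ciInf hx₀)
  have hwk : ∀ k, 0 ≤ w k := fun k =>
    div_nonneg (norm_nonneg _) (hd k).le
  -- dmin ≤ distance to any other point
  have hdle : ∀ k m : Fin n, m ≠ k → dmin ξ k ≤ ‖ξ k - ξ m‖ := by
    intro k m hm
    haveI : Nonempty {j : Fin n // j ≠ k} := ⟨⟨m, hm⟩⟩
    have hb : BddBelow (Set.range fun j : {j : Fin n // j ≠ k} =>
        ‖ξ k - ξ j.1‖) :=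
      ⟨0, by rintro x ⟨j, rfl⟩; exact norm_nonneg _⟩
    exact ciInf_le hb ⟨m, hm⟩
  have habs : ∀ k, ‖u k - ξ k‖ = w k * dmin ξ k := by
    intro k
    rw [hw]
    exact (div_mul_cancel₀ _ (hd k).ne').symm
  have hqr : ((1:ℝ≥0∞)/q).toReal = 1 - 1/p.toReal := by
    have hp0 : p ≠ 0 := fun h => by simp [h] at hp
    have hpinv : (1:ℝ≥0∞)/p ≠ ∞ := by
      simp [one_div, ENNReal.inv_ne_top, hp0]
    have h1p : (1:ℝ≥0∞)/p ≤ 1 := by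
      rw [one_div]
      exact ENNReal.inv_le_one.mpr hp
    have hq1 : (1:ℝ≥0∞)/q = 1 - 1/p :=
      ENNReal.eq_sub_of_add_eq hpinv (by rw [add_comm]; exact hpq)
    rw [hq1, ENNReal.toReal_sub_of_le h1p (by simp), one_div, ENNReal.toReal_inv]
    simp [one_div]
  -- key: w i + w j ≤ 2 ^ (1/q).toReal * pnorm p w
  have key : ∀ i j : Fin n, i ≠ j →
      w i + w j ≤ (2:ℝ) ^ ((1:ℝ≥0∞)/q).toReal * pnorm p w := by
    intro i j hij
    by_cases hptop : p = ∞
    · -- sup norm case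
      have hq : ((1:ℝ≥0∞)/q).toReal = 1 := by rw [hqr, hptop]; simp
      have hN : pnorm p w = ⨆ k, ‖w k‖ := by
        rw [pnorm, hptop]
        rfl
      have hle : ∀ k : Fin n, w k ≤ pnorm p w := by
        intro k
        rw [hN]
        calc w k = ‖w k‖ := (Real.norm_of_nonneg (hwk k)).symm
        _ ≤ ⨆ k, ‖w k‖ := le_ciSup (f := fun k : Fin n => ‖w k‖) (Set.Finite.bddAbove (Set.finite_range _)) k
      rw [hq, Real.rpow_one]
      have := hle i
      have := hle j
      linarith
    · -- finite p case
      set r := p.toReal with hr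
      have hr1 : 1 ≤ r := by
        rw [hr, ← ENNReal.toReal_one]
        exact ENNReal.toReal_mono hptop hp
      have hr0 : 0 < r := lt_of_lt_of_le one_pos hr1
      have hN : pnorm p w = (∑ k, w k ^ r) ^ (1/r) := by
        rw [pnorm, PiLp.norm_eq_sum hr0]
        congr 1
        apply Finset.sum_congr rfl
        intro k _
        rw [WithLp.equiv_symm_apply, PiLp.toLp_apply, Real.norm_of_nonneg (hwk k)]
      set S : ℝ := ∑ k, w k ^ r with hS
      have hterm : ∀ k : Fin n, (0:ℝ) ≤ w k ^ r := fun k =>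
        Real.rpow_nonneg (hwk k) r
      have hS0 : 0 ≤ S := Finset.sum_nonneg fun k _ => hterm k
      have hsum2 : w i ^ r + w j ^ r ≤ S := by
        have h : ∑ k ∈ ({i, j} : Finset (Fin n)), w k ^ r ≤ S := by
          apply Finset.sum_le_sum_of_subset_of_nonneg (Finset.subset_univ _)
          intro k _ _
          exact hterm k
        rwa [Finset.sum_pair hij] at h
      -- power mean inequality via NNReal
      have hpm : (w i + w j) ^ r ≤ (2:ℝ) ^ (r - 1) * (w i ^ r + w j ^ r) := by
        have h := NNReal.coe_le_coe.mpr
          (NNReal.rpow_add_le_mul_rpow_add_rpow ⟨w i, hwk i⟩ ⟨w j, hwk j⟩ hr1)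
        push_cast at h
        convert h using 2
        all_goals rfl
      have hmono : ((w i + w j) ^ r) ^ (1/r) ≤ ((2:ℝ) ^ (r-1) * S) ^ (1/r) := by
        apply Real.rpow_le_rpow (Real.rpow_nonneg (add_nonneg (hwk i) (hwk j)) r)
        · calc (w i + w j) ^ r ≤ (2:ℝ) ^ (r - 1) * (w i ^ r + w j ^ r) := hpm
          _ ≤ (2:ℝ) ^ (r-1) * S :=
              mul_le_mul_of_nonneg_left hsum2 (by positivity)
        · positivity
      have hL : ((w i + w j) ^ r) ^ (1/r) = w i + w j := by
        rw [← Real.rpow_mul (add_nonneg (hwk i) (hwk j)), mul_one_div, div_self hr0.ne',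
          Real.rpow_one]
      have hR : ((2:ℝ) ^ (r-1) * S) ^ (1/r)
          = (2:ℝ) ^ ((1:ℝ≥0∞)/q).toReal * S ^ (1/r) := by
        rw [Real.mul_rpow (by positivity) hS0, ← Real.rpow_mul (by norm_num),
          mul_one_div, sub_div, div_self hr0.ne', hqr]
      rw [hL, hR] at hmono
      rwa [hN]
  intro i j hij
  have hD : 0 < ‖ξ i - ξ j‖ := by
    rw [norm_pos_iff, sub_ne_zero]
    exact fun h => hij (hξ h)
  have h1 : ‖u i - ξ i‖ ≤ w i * ‖ξ i - ξ j‖ := by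
    rw [habs i]
    exact mul_le_mul_of_nonneg_left (hdle i j (Ne.symm hij)) (hwk i)
  have h2 : ‖v j - ξ j‖ ≤ w j * ‖ξ i - ξ j‖ := by
    calc ‖v j - ξ j‖ ≤ ‖u j - ξ j‖ := hvu j
    _ = w j * dmin ξ j := habs j
    _ ≤ w j * ‖ξ j - ξ i‖ :=
        mul_le_mul_of_nonneg_left (hdle j i hij) (hwk j)
    _ = w j * ‖ξ i - ξ j‖ := by rw [norm_sub_rev]
  have htri : ‖ξ i - ξ j‖
      ≤ ‖u i - ξ i‖ + ‖u i - v j‖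
        + ‖v j - ξ j‖ := by
    calc ‖ξ i - ξ j‖
        ≤ ‖ξ i - u i‖ + ‖u i - ξ j‖ :=
          norm_sub_le_norm_sub_add_norm_sub _ _ _
    _ ≤ ‖ξ i - u i‖
        + (‖u i - v j‖ + ‖v j - ξ j‖) := by
          gcongr
          exact norm_sub_le_norm_sub_add_norm_sub _ _ _
    _ = ‖u i - ξ i‖ + ‖u i - v j‖
        + ‖v j - ξ j‖ := by rw [norm_sub_rev]; ring
  have hkey := key i j hij
  have hmul := mul_le_mul_of_nonneg_right hkey hD.le
  nlinarith [hmul, h1, h2, htri, hD.le]
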